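/- Let N ≥ 3 and let w ≥ 0 be any finite weight. Then the misrepresentation-minimizing rule at weight w is not gerrymandering-proof: there exist profiles p and q with ∑_d p_d = ∑_d q_d such that every seat total minimizing Φ_p(·; w) over {0,…,N} equals N−1 while every seat total minimizing Φ_q(·; w) over {0,…,N} equals N−2. -/

import Mathlib

open Finset

/-- Sum of the `S` largest entries of the vote-share profile `p`. -/
noncomputable def topSum {N : ℕ} (p : Fin N → ℝ) (S : ℕ) : ℝ :=
  ∑ i : Fin N, if (i : ℕ) < S then p (Tuple.sort p i.rev) else 0

/-- `ordStat p i` is the `(i+1)`-th largest entry of `p` (so `ordStat p ⟨S-1,_⟩` is `p_(S)`). -/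
noncomputable def ordStat {N : ℕ} (p : Fin N → ℝ) (i : Fin N) : ℝ :=
  p (Tuple.sort p i.rev)

/-- Total misrepresentation `Φ_p(S; w) = S + a − 2·Γ_p(S) + w·|a − S|` of a top-`S`
allocation at weight `w`, where `a = ∑ d, p d`. -/
noncomputable def PhiS {N : ℕ} (p : Fin N → ℝ) (S : ℕ) (w : ℝ) : ℝ :=
  (S : ℝ) + (∑ d, p d) - 2 * topSum p S + w * |(∑ d, p d) - (S : ℝ)|

/-- Proposition 5, "only if" direction: no finite-weight rule is
gerrymandering-proof.
Let `N ≥ 3` and let `w ≥ 0` be any finite weight. Then there exist profiles `p` and `q`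
with the same aggregate vote such that every seat total minimizing `Φ_p(·; w)` over
`{0,…,N}` equals `N−1`, while every seat total minimizing `Φ_q(·; w)` equals `N−2`. -/
lemma sum_ite_lt (N m : ℕ) (hm : m ≤ N) (c : ℝ) :
    (∑ i : Fin N, if (i : ℕ) < m then c else 0) = m * c := by
  rw [Fin.sum_univ_eq_sum_range (fun i => if i < m then c else 0)]
  have h : ∀ i ∈ Finset.range N, (if i < m then c else 0) = if i ∈ Finset.range m then c else 0 := by
    intro i _; simp [Finset.mem_range]
  rw [Finset.sum_congr rfl h, Finset.sum_ite_mem]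
  have : Finset.range N ∩ Finset.range m = Finset.range m := by
    ext x; simp [Finset.mem_range]; omega
  rw [this, Finset.sum_const, nsmul_eq_mul, Finset.card_range]

lemma topSum_of_antitone {N : ℕ} (p : Fin N → ℝ) (h : Antitone p) (S : ℕ) :
    topSum p S = ∑ i : Fin N, if (i : ℕ) < S then p i else 0 := by
  have hmono : Monotone (p ∘ (Fin.revPerm : Equiv.Perm (Fin N))) := by
    intro i j hij
    exact h (by simpa using Fin.rev_le_rev.mpr hij)
  have hs := (Tuple.comp_sort_eq_comp_iff_monotone (σ := Fin.revPerm)).mpr hmono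
  unfold topSum
  refine Finset.sum_congr rfl fun i _ => ?_
  have : p (Fin.revPerm i.rev) = p (Tuple.sort p i.rev) := congrFun hs i.rev
  simp only [Fin.revPerm_apply, Fin.rev_rev] at this
  rw [← this]

lemma topSum_step {N : ℕ} (m : ℕ) (hm : m ≤ N) (c b : ℝ) (hb : 0 ≤ b) (hbc : b ≤ c)
    (S : ℕ) (hS : S ≤ N) :
    topSum (fun i : Fin N => if (i : ℕ) < m then c else b) S
      = (min S m) * (c - b) + S * b := by
  rw [topSum_of_antitone]
  · have : ∀ i : Fin N,
        (if (i : ℕ) < S then (if (i : ℕ) < m then c else b) else 0)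
          = (if (i : ℕ) < min S m then (c - b) else 0) + (if (i : ℕ) < S then b else 0) := by
      intro i
      by_cases h1 : (i : ℕ) < S <;> by_cases h2 : (i : ℕ) < m <;>
        simp [h1, h2, lt_min_iff] <;> ring
    rw [Finset.sum_congr rfl fun i _ => this i, Finset.sum_add_distrib,
      sum_ite_lt N (min S m) (le_trans (min_le_left _ _) hS) (c - b),
      sum_ite_lt N S hS b]
  · intro i j hij
    have hij' : (i : ℕ) ≤ (j : ℕ) := hij
    dsimp only
    split_ifs with h1 h2 h2
    · exact le_refl c
    · omega
    · exact hbc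
    · exact le_refl b

set_option maxHeartbeats 1000000 in
theorem stmt16 (N : ℕ) (hN : 3 ≤ N) (w : ℝ) (hw : 0 ≤ w) :
    ∃ p q : Fin N → ℝ,
      (∀ d, 0 ≤ p d ∧ p d ≤ 1) ∧ (∀ d, 0 ≤ q d ∧ q d ≤ 1) ∧
      (∑ d, p d) = (∑ d, q d) ∧
      (∀ S ≤ N, PhiS p (N - 1) w ≤ PhiS p S w) ∧
      (∀ S ≤ N, (∀ S' ≤ N, PhiS p S w ≤ PhiS p S' w) → S = N - 1) ∧
      (∀ S ≤ N, PhiS q (N - 2) w ≤ PhiS q S w) ∧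
      (∀ S ≤ N, (∀ S' ≤ N, PhiS q S w ≤ PhiS q S' w) → S = N - 2) := by
  obtain ⟨n, hn_def⟩ : ∃ x : ℝ, x = (N : ℝ) := ⟨_, rfl⟩
  have hn : (3 : ℝ) ≤ n := by rw [hn_def]; exact_mod_cast hN
  have hd : (0 : ℝ) < 2 * (n - 1) := by linarith
  obtain ⟨c, hc_def⟩ : ∃ x : ℝ, x = 1 - 1 / (2 * (n - 1)) := ⟨_, rfl⟩
  have hinv : 1 / (2 * (n - 1)) ≤ 1 / 2 := by
    rw [div_le_div_iff₀ hd (by norm_num)]; linarith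
  have hinv0 : 0 < 1 / (2 * (n - 1)) := by positivity
  have h2c : (1 / 2 : ℝ) ≤ c := by rw [hc_def]; linarith
  have hclt : c < 1 := by rw [hc_def]; linarith
  have hc0 : (0 : ℝ) ≤ c := by linarith
  have hA : (n - 1) * c = n - 3 / 2 := by
    rw [hc_def]; field_simp [show n - 1 ≠ 0 by linarith]; ring
  have hcast1 : ((N - 1 : ℕ) : ℝ) = n - 1 := by
    rw [hn_def, Nat.cast_sub (by omega)]; push_cast; ring
  have hcast2 : ((N - 2 : ℕ) : ℝ) = n - 2 := by
    rw [hn_def, Nat.cast_sub (by omega)]; push_cast; ring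
  obtain ⟨p, hp_def⟩ : ∃ f : Fin N → ℝ, f = fun i : Fin N => if (i : ℕ) < N - 1 then c else 0 := ⟨fun i : Fin N => if (i : ℕ) < N - 1 then c else 0, rfl⟩
  obtain ⟨q, hq_def⟩ : ∃ f : Fin N → ℝ, f = fun i : Fin N => if (i : ℕ) < N - 2 then (1 : ℝ) else 1 / 4 := ⟨fun i : Fin N => if (i : ℕ) < N - 2 then (1 : ℝ) else 1 / 4, rfl⟩
  have hap : (∑ d, p d) = n - 3 / 2 := by
    rw [hp_def, sum_ite_lt N (N - 1) (by omega) c, hcast1, hA]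
  have haq : (∑ d, q d) = n - 3 / 2 := by
    have hq' : ∀ d : Fin N, q d = (if (d : ℕ) < N - 2 then (3 / 4 : ℝ) else 0) + 1 / 4 := by
      intro d; rw [hq_def]
      by_cases h : (d : ℕ) < N - 2 <;> simp [h] <;> norm_num
    rw [Finset.sum_congr rfl fun d _ => hq' d, Finset.sum_add_distrib,
      sum_ite_lt N (N - 2) (by omega) (3 / 4), Finset.sum_const, Finset.card_univ,
      Fintype.card_fin, nsmul_eq_mul, hcast2, ← hn_def]
    ring
  -- Phi formulas
  have hPhiP : ∀ S : ℕ, S ≤ N →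
      PhiS p S w = (S : ℝ) + (n - 3 / 2) - 2 * ((min S (N - 1) : ℕ) : ℝ) * c
        + w * |n - 3 / 2 - (S : ℝ)| := by
    intro S hS
    unfold PhiS
    rw [hap, hp_def, topSum_step (N - 1) (by omega) c 0 le_rfl hc0 S hS]
    push_cast
    ring
  have hPhiQ : ∀ S : ℕ, S ≤ N →
      PhiS q S w = (S : ℝ) + (n - 3 / 2)
        - 2 * (((min S (N - 2) : ℕ) : ℝ) * (3 / 4) + (S : ℝ) * (1 / 4))
        + w * |n - 3 / 2 - (S : ℝ)| := by
    intro S hS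
    unfold PhiS
    rw [haq, hq_def, topSum_step (N - 2) (by omega) 1 (1 / 4) (by norm_num) (by norm_num) S hS]
    push_cast
    ring
  -- values at key points
  have habs1 : |n - 3 / 2 - (n - 1)| = 1 / 2 := by
    rw [show n - 3 / 2 - (n - 1) = -(1 / 2) by ring, abs_neg, abs_of_nonneg (by norm_num)]
  have habs2 : |n - 3 / 2 - (n - 2)| = 1 / 2 := by
    rw [show n - 3 / 2 - (n - 2) = 1 / 2 by ring, abs_of_nonneg (by norm_num)]
  have habsN : |n - 3 / 2 - n| = 3 / 2 := by
    rw [show n - 3 / 2 - n = -(3 / 2) by ring, abs_neg, abs_of_nonneg (by norm_num)]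
  have hP1 : PhiS p (N - 1) w = 1 / 2 + w / 2 := by
    rw [hPhiP (N - 1) (by omega), min_self, hcast1, habs1]
    linear_combination (-2 : ℝ) * hA
  have hPN : PhiS p N w = 3 / 2 + 3 / 2 * w := by
    rw [hPhiP N le_rfl, min_eq_right (by omega : N - 1 ≤ N), hcast1, ← hn_def, habsN]
    linear_combination (-2 : ℝ) * hA
  have hQ2 : PhiS q (N - 2) w = 1 / 2 + w / 2 := by
    rw [hPhiQ (N - 2) (by omega), min_self, hcast2, habs2]
    ring
  have hQ1 : PhiS q (N - 1) w = 1 + w / 2 := by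
    rw [hPhiQ (N - 1) (by omega), min_eq_right (by omega : N - 2 ≤ N - 1),
      hcast1, hcast2, habs1]
    ring
  have hQN : PhiS q N w = 3 / 2 + 3 / 2 * w := by
    rw [hPhiQ N le_rfl, min_eq_right (by omega : N - 2 ≤ N), hcast2, ← hn_def, habsN]
    ring
  -- strict key inequalities
  have hpkey : ∀ S ≤ N, S ≠ N - 1 → PhiS p (N - 1) w < PhiS p S w := by
    intro S hS hne
    rcases eq_or_lt_of_le hS with rfl | hSN
    · rw [hP1, hPN]; linarith
    · -- S ≤ N - 1, S ≠ N - 1 hence S ≤ N - 2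
      have hS2 : S ≤ N - 2 := by omega
      have hs2 : (S : ℝ) ≤ n - 2 := by
        calc (S : ℝ) ≤ ((N - 2 : ℕ) : ℝ) := by exact_mod_cast hS2
        _ = n - 2 := hcast2
      have habs : |n - 3 / 2 - (S : ℝ)| = n - 3 / 2 - (S : ℝ) :=
        abs_of_nonneg (by linarith)
      rw [hP1, hPhiP S (by omega), min_eq_left (by omega : S ≤ N - 1), habs]
      have hs0 : (0 : ℝ) ≤ (S : ℝ) := Nat.cast_nonneg S
      nlinarith [mul_nonneg hw (show (0 : ℝ) ≤ n - 2 - (S : ℝ) by linarith),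
        mul_nonneg (show (0 : ℝ) ≤ n - 2 - (S : ℝ) by linarith)
          (show (0 : ℝ) ≤ 2 * c - 1 by linarith),
        mul_pos (show (0 : ℝ) < n - 2 by linarith) (show (0 : ℝ) < 1 - c by linarith)]
  have hqkey : ∀ S ≤ N, S ≠ N - 2 → PhiS q (N - 2) w < PhiS q S w := by
    intro S hS hne
    rcases eq_or_lt_of_le hS with rfl | hSN
    · rw [hQ2, hQN]; linarith
    · rcases Nat.eq_or_lt_of_le (by omega : S + 1 ≤ N) with h1 | h1
      · have : S = N - 1 := by omega
        rw [this, hQ2, hQ1]; linarith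
      · have hS3 : S ≤ N - 3 := by omega
        have hs3 : (S : ℝ) ≤ n - 3 := by
          have : ((N - 3 : ℕ) : ℝ) = n - 3 := by
            rw [hn_def, Nat.cast_sub (by omega)]; push_cast; ring
          calc (S : ℝ) ≤ ((N - 3 : ℕ) : ℝ) := by exact_mod_cast hS3
          _ = n - 3 := this
        have habs : |n - 3 / 2 - (S : ℝ)| = n - 3 / 2 - (S : ℝ) :=
          abs_of_nonneg (by linarith)
        rw [hQ2, hPhiQ S (by omega), min_eq_left (by omega : S ≤ N - 2), habs]
        nlinarith [mul_nonneg hw (show (0 : ℝ) ≤ n - 2 - (S : ℝ) by linarith)]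
  refine ⟨p, q, ?_, ?_, by rw [hap, haq], ?_, ?_, ?_, ?_⟩
  · intro d; rw [hp_def]; dsimp only
    split_ifs <;> constructor <;> first | linarith | norm_num
  · intro d; rw [hq_def]; dsimp only
    split_ifs <;> constructor <;> norm_num
  · intro S hS
    by_cases h : S = N - 1
    · rw [h]
    · exact le_of_lt (hpkey S hS h)
  · intro S hS hmin
    by_contra h
    have h1 := hmin (N - 1) (by omega)
    have h2 := hpkey S hS h
    linarith
  · intro S hS
    by_cases h : S = N - 2
    · rw [h]
    · exact le_of_lt (hqkey S hS h)
  · intro S hS hmin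
    by_contra h
    have h1 := hmin (N - 2) (by omega)
    have h2 := hqkey S hS h
    linarith
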